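/- arXiv:1903.06514 — 4 statements merged into one kernel-verified Lean document; each statement's English description precedes it below -/
import Mathlib

section
/- Let O and P be complete lattices and let F : O → P and G : P → O be continuous, i.e., each preserves sInf and sSup of all nonempty subsets. Let C = {o ∈ O | ∃ p ∈ P, F o ≤ p ∧ G p ≤ o} and D = {p ∈ P | ∃ o ∈ O, F o ≤ p ∧ G p ≤ o} be the sets of all components of simultaneous pre-fixed points of F and G. Then C is closed under nonempty infima and suprema (for every nonempty A ⊆ C, sInf A ∈ C and sSup A ∈ C), and likewise D is closed under nonempty infima and suprema. -/
theorem components_of_simultaneous_prefixed_points_closed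
    {O P : Type*} [CompleteLattice O] [CompleteLattice P]
    (F : O → P) (G : P → O)
    (hFinf : ∀ M : Set O, M.Nonempty → F (sInf M) = sInf (F '' M))
    (hFsup : ∀ M : Set O, M.Nonempty → F (sSup M) = sSup (F '' M))
    (hGinf : ∀ N : Set P, N.Nonempty → G (sInf N) = sInf (G '' N))
    (hGsup : ∀ N : Set P, N.Nonempty → G (sSup N) = sSup (G '' N)) :
    (∀ A : Set O, A ⊆ {o : O | ∃ p : P, F o ≤ p ∧ G p ≤ o} → A.Nonempty →
      sInf A ∈ {o : O | ∃ p : P, F o ≤ p ∧ G p ≤ o} ∧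
      sSup A ∈ {o : O | ∃ p : P, F o ≤ p ∧ G p ≤ o}) ∧
    (∀ B : Set P, B ⊆ {p : P | ∃ o : O, F o ≤ p ∧ G p ≤ o} → B.Nonempty →
      sInf B ∈ {p : P | ∃ o : O, F o ≤ p ∧ G p ≤ o} ∧
      sSup B ∈ {p : P | ∃ o : O, F o ≤ p ∧ G p ≤ o}) := by
  classical
  have Fmono : Monotone F := by
    intro x y hxy
    have h := hFinf {x, y} ⟨x, by simp⟩
    rw [Set.image_pair] at h
    have hx : sInf ({x, y} : Set O) = x := by
      rw [sInf_pair, inf_eq_left]; exact hxy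
    rw [hx] at h
    rw [sInf_pair] at h
    exact h.le.trans inf_le_right
  have Gmono : Monotone G := by
    intro x y hxy
    have h := hGinf {x, y} ⟨x, by simp⟩
    rw [Set.image_pair] at h
    have hx : sInf ({x, y} : Set P) = x := by
      rw [sInf_pair, inf_eq_left]; exact hxy
    rw [hx] at h
    rw [sInf_pair] at h
    exact h.le.trans inf_le_right
  constructor
  · intro A hA hAne
    choose pfun hF hG using fun a (ha : a ∈ A) => hA ha
    constructor
    · refine ⟨sInf {q | ∃ a, ∃ ha : a ∈ A, q = pfun a ha}, ?_, ?_⟩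
      · apply le_sInf
        rintro q ⟨a, ha, rfl⟩
        exact (Fmono (sInf_le ha)).trans (hF a ha)
      · apply le_sInf
        intro a ha
        refine (Gmono (sInf_le ?_)).trans (hG a ha)
        exact ⟨a, ha, rfl⟩
    · refine ⟨sSup {q | ∃ a, ∃ ha : a ∈ A, q = pfun a ha}, ?_, ?_⟩
      · rw [hFsup A hAne]
        apply sSup_le
        rintro q ⟨a, ha, rfl⟩
        refine (hF a ha).trans (le_sSup ?_)
        exact ⟨a, ha, rfl⟩
      · obtain ⟨a₀, ha₀⟩ := hAne
        rw [hGsup {q | ∃ a, ∃ ha : a ∈ A, q = pfun a ha} ⟨pfun a₀ ha₀, a₀, ha₀, rfl⟩]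
        apply sSup_le
        rintro q ⟨q', ⟨a, ha, rfl⟩, rfl⟩
        exact (hG a ha).trans (le_sSup ha)
  · intro B hB hBne
    choose ofun hF hG using fun b (hb : b ∈ B) => hB hb
    constructor
    · refine ⟨sInf {q | ∃ b, ∃ hb : b ∈ B, q = ofun b hb}, ?_, ?_⟩
      · apply le_sInf
        intro b hb
        refine (Fmono (sInf_le ?_)).trans (hF b hb)
        exact ⟨b, hb, rfl⟩
      · apply le_sInf
        rintro q ⟨b, hb, rfl⟩
        exact (Gmono (sInf_le hb)).trans (hG b hb)
    · refine ⟨sSup {q | ∃ b, ∃ hb : b ∈ B, q = ofun b hb}, ?_, ?_⟩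
      · obtain ⟨b₀, hb₀⟩ := hBne
        rw [hFsup {q | ∃ b, ∃ hb : b ∈ B, q = ofun b hb} ⟨ofun b₀ hb₀, b₀, hb₀, rfl⟩]
        apply sSup_le
        rintro q ⟨q', ⟨b, hb, rfl⟩, rfl⟩
        exact (hF b hb).trans (le_sSup hb)
      · rw [hGsup B hBne]
        apply sSup_le
        rintro q ⟨b, hb, rfl⟩
        refine (hG b hb).trans (le_sSup ?_)
        exact ⟨b, hb, rfl⟩
end

section
/- (Simultaneous Fixed Points Theorem, least part.) Let O and P be complete lattices and let F : O → P and G : P → O be continuous, i.e., each preserves sInf and sSup of all nonempty subsets. Define μF = sInf {o ∈ O | ∃ p ∈ P, F o ≤ p ∧ G p ≤ o} and μG = sInf {p ∈ P | ∃ o ∈ O, F o ≤ p ∧ G p ≤ o}. Then F μF = μG and G μG = μF (so (μF, μG) is a simultaneous fixed point of F and G), and for every simultaneous pre-fixed point (o, p) of F and G (i.e., F o ≤ p and G p ≤ o) one has μF ≤ o and μG ≤ p; hence (μF, μG) is the least simultaneous pre-fixed point and the least simultaneous fixed point of F and G. -/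
lemma mono_of_inf_pres {O P : Type*} [CompleteLattice O] [CompleteLattice P]
    (F : O → P) (h : ∀ M : Set O, M.Nonempty → F (sInf M) = sInf (F '' M))
    {a b : O} (hab : a ≤ b) : F a ≤ F b := by
  have : F (sInf {a, b}) = sInf (F '' {a, b}) := h _ ⟨a, by simp⟩
  simp only [Set.image_insert_eq, Set.image_singleton, sInf_insert, sInf_singleton] at this
  rw [inf_eq_left.mpr hab] at this
  rw [this]; exact inf_le_right

theorem simultaneous_fixed_points_least
    {O P : Type*} [CompleteLattice O] [CompleteLattice P]
    (F : O → P) (G : P → O)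
    (hFinf : ∀ M : Set O, M.Nonempty → F (sInf M) = sInf (F '' M))
    (hFsup : ∀ M : Set O, M.Nonempty → F (sSup M) = sSup (F '' M))
    (hGinf : ∀ N : Set P, N.Nonempty → G (sInf N) = sInf (G '' N))
    (hGsup : ∀ N : Set P, N.Nonempty → G (sSup N) = sSup (G '' N))
    (μF : O) (μG : P)
    (hμF : μF = sInf {o : O | ∃ p : P, F o ≤ p ∧ G p ≤ o})
    (hμG : μG = sInf {p : P | ∃ o : O, F o ≤ p ∧ G p ≤ o}) :
    F μF = μG ∧ G μG = μF ∧
    ∀ o : O, ∀ p : P, F o ≤ p → G p ≤ o → μF ≤ o ∧ μG ≤ p := by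
  have Fmono : ∀ {a b : O}, a ≤ b → F a ≤ F b := fun h => mono_of_inf_pres F hFinf h
  have Gmono : ∀ {a b : P}, a ≤ b → G a ≤ G b := fun h => mono_of_inf_pres G hGinf h
  -- least part
  have least : ∀ o : O, ∀ p : P, F o ≤ p → G p ≤ o → μF ≤ o ∧ μG ≤ p := by
    intro o p h1 h2
    exact ⟨hμF ▸ sInf_le ⟨p, h1, h2⟩, hμG ▸ sInf_le ⟨o, h1, h2⟩⟩
  -- F μF ≤ μG
  have h1 : F μF ≤ μG := by
    rw [hμG]
    apply le_sInf
    rintro p ⟨o, h1, h2⟩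
    calc F μF ≤ F o := Fmono (least o p h1 h2).1
    _ ≤ p := h1
  -- G μG ≤ μF
  have h2 : G μG ≤ μF := by
    rw [hμF]
    apply le_sInf
    rintro o ⟨p, hp1, hp2⟩
    calc G μG ≤ G p := Gmono (least o p hp1 hp2).2
    _ ≤ o := hp2
  -- reverse
  have h3 : μG ≤ F μF := (least μF (F μF) le_rfl (le_trans (Gmono h1) h2)).2
  have h4 : μF ≤ G μG := (least (G μG) μG (le_trans (Fmono h2) h1) le_rfl).1
  exact ⟨le_antisymm h1 h3, le_antisymm h2 h4, least⟩
end

section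
/- (Simultaneous Fixed Points Theorem, greatest part.) Let O and P be complete lattices and let F : O → P and G : P → O be continuous, i.e., each preserves sInf and sSup of all nonempty subsets. Define νF = sSup {o ∈ O | ∃ p ∈ P, p ≤ F o ∧ o ≤ G p} and νG = sSup {p ∈ P | ∃ o ∈ O, p ≤ F o ∧ o ≤ G p}. Then F νF = νG and G νG = νF (so (νF, νG) is a simultaneous fixed point of F and G), and for every simultaneous post-fixed point (o, p) of F and G (i.e., p ≤ F o and o ≤ G p) one has o ≤ νF and p ≤ νG; hence (νF, νG) is the greatest simultaneous post-fixed point and the greatest simultaneous fixed point of F and G. -/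
theorem simultaneous_fixed_points_greatest
    {O P : Type*} [CompleteLattice O] [CompleteLattice P]
    (F : O → P) (G : P → O)
    (hFinf : ∀ M : Set O, M.Nonempty → F (sInf M) = sInf (F '' M))
    (hFsup : ∀ M : Set O, M.Nonempty → F (sSup M) = sSup (F '' M))
    (hGinf : ∀ N : Set P, N.Nonempty → G (sInf N) = sInf (G '' N))
    (hGsup : ∀ N : Set P, N.Nonempty → G (sSup N) = sSup (G '' N))
    (νF : O) (νG : P)
    (hνF : νF = sSup {o : O | ∃ p : P, p ≤ F o ∧ o ≤ G p})
    (hνG : νG = sSup {p : P | ∃ o : O, p ≤ F o ∧ o ≤ G p}) :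
    F νF = νG ∧ G νG = νF ∧
    ∀ o : O, ∀ p : P, p ≤ F o → o ≤ G p → o ≤ νF ∧ p ≤ νG := by
  have Fmono : Monotone F := by
    intro a b hab
    have h := hFsup {a, b} ⟨a, by simp⟩
    rw [Set.image_pair, csSup_pair, csSup_pair, sup_eq_right.2 hab] at h
    rw [h]; exact le_sup_left
  have Gmono : Monotone G := by
    intro a b hab
    have h := hGsup {a, b} ⟨a, by simp⟩
    rw [Set.image_pair, csSup_pair, csSup_pair, sup_eq_right.2 hab] at h
    rw [h]; exact le_sup_left
  have hpost : ∀ o : O, ∀ p : P, p ≤ F o → o ≤ G p → o ≤ νF ∧ p ≤ νG := by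
    intro o p h1 h2
    constructor
    · rw [hνF]; exact le_sSup ⟨p, h1, h2⟩
    · rw [hνG]; exact le_sSup ⟨o, h1, h2⟩
  have hνGle : νG ≤ F νF := by
    rw [hνG]
    apply sSup_le
    rintro p ⟨o, h1, h2⟩
    exact h1.trans (Fmono (hpost o p h1 h2).1)
  have hνFle : νF ≤ G νG := by
    rw [hνF]
    apply sSup_le
    rintro o ⟨p, h1, h2⟩
    exact h2.trans (Gmono (hpost o p h1 h2).2)
  have key := hpost (G νG) (F νF) (Fmono hνFle) (Gmono hνGle)
  exact ⟨le_antisymm key.2 hνGle, le_antisymm key.1 hνFle, hpost⟩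
end

section
/- (Least simultaneous fixed point under monotonicity alone.) Let O and P be complete lattices and let F : O → P and G : P → O be monotone. Define μF = sInf {o ∈ O | ∃ p ∈ P, F o ≤ p ∧ G p ≤ o} and μG = sInf {p ∈ P | ∃ o ∈ O, F o ≤ p ∧ G p ≤ o}. Then F μF = μG and G μG = μF (so (μF, μG) is a simultaneous fixed point of F and G), and for every simultaneous pre-fixed point (o, p) of F and G (i.e., F o ≤ p and G p ≤ o) one has μF ≤ o and μG ≤ p; hence (μF, μG) is the least simultaneous pre-fixed point and the least simultaneous fixed point of F and G. -/
theorem least_simultaneous_fixed_point_of_monotone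
    {O P : Type*} [CompleteLattice O] [CompleteLattice P]
    (F : O → P) (G : P → O) (hF : Monotone F) (hG : Monotone G)
    (μF : O) (μG : P)
    (hμF : μF = sInf {o : O | ∃ p : P, F o ≤ p ∧ G p ≤ o})
    (hμG : μG = sInf {p : P | ∃ o : O, F o ≤ p ∧ G p ≤ o}) :
    F μF = μG ∧ G μG = μF ∧
    ∀ o : O, ∀ p : P, F o ≤ p → G p ≤ o → μF ≤ o ∧ μG ≤ p := by
  have least : ∀ o : O, ∀ p : P, F o ≤ p → G p ≤ o → μF ≤ o ∧ μG ≤ p := by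
    intro o p h1 h2
    exact ⟨hμF ▸ sInf_le ⟨p, h1, h2⟩, hμG ▸ sInf_le ⟨o, h1, h2⟩⟩
  have hFle : F μF ≤ μG := by
    rw [hμG]
    apply le_sInf
    rintro p ⟨o, h1, h2⟩
    exact le_trans (hF (least o p h1 h2).1) h1
  have hGle : G μG ≤ μF := by
    rw [hμF]
    apply le_sInf
    rintro o ⟨p, h1, h2⟩
    exact le_trans (hG (least o p h1 h2).2) h2
  have h1 : μG ≤ F μF := (least μF (F μF) le_rfl (le_trans (hG hFle) hGle)).2
  have h2 : μF ≤ G μG := (least (G μG) μG (le_trans (hF hGle) hFle) le_rfl).1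
  exact ⟨le_antisymm hFle h1, le_antisymm hGle h2, least⟩
end
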